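/- Let V be a vector superspace and g ⊆ gl(V) a Lie supersubalgebra, and let R ∈ R(g) be even and annihilated by the g-action on R(g). Then the subspace h₀ = span{ R(x,y) : x, y ∈ V } ⊆ g is a Lie supersubalgebra of g, and together with V it forms a symmetric decomposition: [h₀, h₀] ⊆ h₀, [h₀, V] ⊆ V, and [V, V] := −R(·,·) has image in h₀, satisfying all components of the super Jacobi identity for h₀ ⊕ V. -/

import Mathlib

/-- A vector superspace structure on `V`: a pair of complementary subspaces. -/
structure SuperSpace (k V : Type*) [Field k] [AddCommGroup V] [Module k V] where
  even : Submodule k V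
  odd : Submodule k V
  isCompl : IsCompl even odd

variable {k V : Type*} [Field k] [AddCommGroup V] [Module k V]

/-- The subspace of elements of parity `p`. -/
def SuperSpace.part (S : SuperSpace k V) (p : ZMod 2) : Submodule k V :=
  if p = 0 then S.even else S.odd

/-- The sign `(-1)^p`. -/
def sg (k : Type*) [Field k] (p : ZMod 2) : k := if p = 1 then -1 else 1

/-- `A` is a homogeneous endomorphism of parity `p`. -/
def SuperSpace.HomEnd (S : SuperSpace k V) (p : ZMod 2) (A : Module.End k V) : Prop :=
  ∀ q x, x ∈ S.part q → A x ∈ S.part (q + p)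

/-- Supercommutator of endomorphisms of parities `pa`, `pb`. -/
def sbr (pa pb : ZMod 2) (A B : Module.End k V) : Module.End k V :=
  A * B - sg k (pa * pb) • (B * A)

/-- Super skew-symmetry of a bilinear map with operator values. -/
def SuperSkew (S : SuperSpace k V) (R : V →ₗ[k] V →ₗ[k] Module.End k V) : Prop :=
  ∀ p q x y, x ∈ S.part p → y ∈ S.part q → R x y = - sg k (p * q) • R y x

/-- The first Bianchi super-identity. -/
def Bianchi (S : SuperSpace k V) (R : V →ₗ[k] V →ₗ[k] Module.End k V) : Prop :=
  ∀ p q r x y z, x ∈ S.part p → y ∈ S.part q → z ∈ S.part r →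
    R x y z + sg k (p * (q + r)) • R y z x + sg k (r * (p + q)) • R z x y = 0

/-- `R` is an algebraic curvature tensor of type `g`. -/
def CurvOf (S : SuperSpace k V) (g : Submodule k (Module.End k V))
    (R : V →ₗ[k] V →ₗ[k] Module.End k V) : Prop :=
  (∀ x y, R x y ∈ g) ∧ SuperSkew S R ∧ Bianchi S R

/-- `R` is homogeneous of parity `pR`: `R x y` has parity `pR + |x| + |y|`. -/
def HomCurv (S : SuperSpace k V) (pR : ZMod 2)
    (R : V →ₗ[k] V →ₗ[k] Module.End k V) : Prop :=
  ∀ p q x y, x ∈ S.part p → y ∈ S.part q → S.HomEnd (pR + p + q) (R x y)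

/-- The bracket on `h₀ ⊕ V` determined by an algebraic curvature tensor `R`, for
elements of parities `p`, `q`: `[(A,x),(B,y)] = ([A,B] − R(x,y), A y − (−1)^{pq} B x)`. -/
def hbr {k V : Type*} [Field k] [AddCommGroup V] [Module k V]
    (R : V →ₗ[k] V →ₗ[k] Module.End k V) (p q : ZMod 2)
    (a b : Module.End k V × V) : Module.End k V × V :=
  (sbr p q a.1 b.1 - R a.2 b.2, a.1 b.2 - sg k (p * q) • b.1 a.2)


-- ===== auxiliary lemmas =====

@[simp] lemma sg_zero : sg k 0 = 1 := rfl
@[simp] lemma sg_one : sg k 1 = -1 := rfl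
@[simp] lemma two_zmod : (1 + 1 : ZMod 2) = 0 := by decide

lemma zmod2_cases (t : ZMod 2) : t = 0 ∨ t = 1 := by revert t; decide

lemma zmod2_ne (a b : ZMod 2) (h : a ≠ b) : a = b + 1 := by revert a b; decide

/-- projection onto the parity-`t` part -/
noncomputable def SuperSpace.proj (S : SuperSpace k V) (t : ZMod 2) : Module.End k V :=
  if t = 0 then S.even.subtype ∘ₗ S.even.projectionOnto S.odd S.isCompl
  else S.odd.subtype ∘ₗ S.odd.projectionOnto S.even S.isCompl.symm

lemma SuperSpace.proj_mem (S : SuperSpace k V) (t : ZMod 2) (v : V) :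
    S.proj t v ∈ S.part t := by
  obtain rfl | rfl := zmod2_cases t <;> simp [SuperSpace.proj, SuperSpace.part]

lemma SuperSpace.proj_add (S : SuperSpace k V) (v : V) :
    S.proj 0 v + S.proj 1 v = v := by
  simp only [SuperSpace.proj, reduceIte, one_ne_zero]
  exact Submodule.projection_add_projection_eq_self S.isCompl v

lemma SuperSpace.proj_of_mem (S : SuperSpace k V) {t : ZMod 2} {v : V}
    (h : v ∈ S.part t) : S.proj t v = v := by
  obtain rfl | rfl := zmod2_cases t <;>
    simp only [SuperSpace.proj, SuperSpace.part, reduceIte, one_ne_zero] at h ⊢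
  · simp only [LinearMap.coe_comp, Function.comp_apply]
    exact congrArg _ (Submodule.projectionOnto_apply_left S.isCompl ⟨v, h⟩)
  · simp only [LinearMap.coe_comp, Function.comp_apply]
    exact congrArg _ (Submodule.projectionOnto_apply_left S.isCompl.symm ⟨v, h⟩)

lemma SuperSpace.proj_of_mem' (S : SuperSpace k V) {t : ZMod 2} {v : V}
    (h : v ∈ S.part (t + 1)) : S.proj t v = 0 := by
  obtain rfl | rfl := zmod2_cases t <;>
    simp only [SuperSpace.proj, SuperSpace.part, two_zmod, zero_add, reduceIte,
      one_ne_zero] at h ⊢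
  · simp only [LinearMap.coe_comp, Function.comp_apply]
    rw [(Submodule.projectionOnto_apply_eq_zero_iff S.isCompl).2 h]; simp
  · simp only [LinearMap.coe_comp, Function.comp_apply]
    rw [(Submodule.projectionOnto_apply_eq_zero_iff S.isCompl.symm).2 h]; simp

/-- the component of parity `pb` of an endomorphism -/
noncomputable def SuperSpace.phi (S : SuperSpace k V) (pb : ZMod 2)
    (B : Module.End k V) : Module.End k V :=
  S.proj pb * B * S.proj 0 + S.proj (pb + 1) * B * S.proj 1

lemma SuperSpace.phi_add (S : SuperSpace k V) (pb : ZMod 2) (B B' : Module.End k V) :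
    S.phi pb (B + B') = S.phi pb B + S.phi pb B' := by
  simp only [SuperSpace.phi, mul_add, add_mul]; abel

lemma SuperSpace.phi_smul (S : SuperSpace k V) (pb : ZMod 2) (c : k)
    (B : Module.End k V) : S.phi pb (c • B) = c • S.phi pb B := by
  simp only [SuperSpace.phi, mul_smul_comm, smul_mul_assoc, smul_add]

lemma SuperSpace.phi_zero (S : SuperSpace k V) (pb : ZMod 2) :
    S.phi pb (0 : Module.End k V) = 0 := by
  simp [SuperSpace.phi]

lemma SuperSpace.phi_of_homEnd (S : SuperSpace k V) {pb : ZMod 2}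
    {B : Module.End k V} (hB : S.HomEnd pb B) : S.phi pb B = B := by
  ext v
  have h0 : B (S.proj 0 v) ∈ S.part pb := by
    have := hB 0 _ (S.proj_mem 0 v); rwa [zero_add] at this
  have h1 : B (S.proj 1 v) ∈ S.part (pb + 1) := by
    have := hB 1 _ (S.proj_mem 1 v); rwa [add_comm] at this
  simp only [SuperSpace.phi, LinearMap.add_apply, Module.End.mul_apply]
  rw [S.proj_of_mem h0, S.proj_of_mem h1, ← map_add, S.proj_add]

lemma SuperSpace.phi_of_homEnd' (S : SuperSpace k V) {pb : ZMod 2}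
    {B : Module.End k V} (hB : S.HomEnd (pb + 1) B) : S.phi pb B = 0 := by
  ext v
  have h0 : B (S.proj 0 v) ∈ S.part (pb + 1) := by
    have := hB 0 _ (S.proj_mem 0 v); rwa [zero_add] at this
  have h1 : B (S.proj 1 v) ∈ S.part ((pb + 1) + 1) := by
    have := hB 1 _ (S.proj_mem 1 v); rwa [add_comm] at this
  simp only [SuperSpace.phi, LinearMap.add_apply, Module.End.mul_apply]
  rw [S.proj_of_mem' h0, S.proj_of_mem' h1]
  simp

lemma sbr_add_right (pa pb : ZMod 2) (A X Y : Module.End k V) :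
    sbr pa pb A (X + Y) = sbr pa pb A X + sbr pa pb A Y := by
  simp only [sbr, mul_add, add_mul, smul_add]; abel

lemma sbr_sub_right (pa pb : ZMod 2) (A X Y : Module.End k V) :
    sbr pa pb A (X - Y) = sbr pa pb A X - sbr pa pb A Y := by
  simp only [sbr, mul_sub, sub_mul, smul_sub]; abel

lemma sbr_smul_right (pa pb : ZMod 2) (c : k) (A X : Module.End k V) :
    sbr pa pb A (c • X) = c • sbr pa pb A X := by
  simp only [sbr, mul_smul_comm, smul_mul_assoc, smul_sub, smul_comm c]

lemma sbr_zero_right (pa pb : ZMod 2) (A : Module.End k V) :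
    sbr pa pb A (0 : Module.End k V) = 0 := by
  simp [sbr]

lemma sbr_mem_span (S : SuperSpace k V) (g : Submodule k (Module.End k V))
    (R : V →ₗ[k] V →ₗ[k] Module.End k V)
    (heven : HomCurv S 0 R)
    (hann : ∀ (pA : ZMod 2) (A : Module.End k V), A ∈ g → S.HomEnd pA A →
      ∀ (p q : ZMod 2) (x y : V), x ∈ S.part p → y ∈ S.part q →
        sbr pA (p + q) A (R x y) = R (A x) y + sg k (pA * p) • R x (A y))
    (pa pb : ZMod 2) (A B : Module.End k V)
    (hAg : A ∈ g) (hA : S.HomEnd pa A)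
    (hBsp : B ∈ Submodule.span k {A : Module.End k V | ∃ x y, A = R x y})
    (hB : S.HomEnd pb B) :
    sbr pa pb A B ∈ Submodule.span k {A : Module.End k V | ∃ x y, A = R x y} := by
  set sp := Submodule.span k {A : Module.End k V | ∃ x y, A = R x y} with hsp
  have key0 : ∀ (i j : ZMod 2) (xi yj : V), xi ∈ S.part i → yj ∈ S.part j →
      sbr pa pb A (S.phi pb (R xi yj)) ∈ sp := by
    intro i j xi yj hxi hyj
    have hhom : S.HomEnd (i + j) (R xi yj) := by
      have := heven i j xi yj hxi hyj; rwa [zero_add] at this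
    rcases eq_or_ne (i + j) pb with hij | hij
    · rw [hij] at hhom
      rw [S.phi_of_homEnd hhom]
      have h := hann pa A hAg hA i j xi yj hxi hyj
      rw [hij] at h
      rw [h]
      exact add_mem (Submodule.subset_span ⟨_, _, rfl⟩)
        (Submodule.smul_mem _ _ (Submodule.subset_span ⟨_, _, rfl⟩))
    · have : i + j = pb + 1 := zmod2_ne _ _ hij
      rw [this] at hhom
      rw [S.phi_of_homEnd' hhom, sbr_zero_right]
      exact Submodule.zero_mem _
  have key : ∀ x y : V, sbr pa pb A (S.phi pb (R x y)) ∈ sp := by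
    intro x y
    have hdecomp : R x y = R (S.proj 0 x) (S.proj 0 y) + R (S.proj 0 x) (S.proj 1 y)
        + R (S.proj 1 x) (S.proj 0 y) + R (S.proj 1 x) (S.proj 1 y) := by
      conv_lhs => rw [← S.proj_add x, ← S.proj_add y]
      simp only [map_add, LinearMap.add_apply]
      abel
    rw [hdecomp, S.phi_add, S.phi_add, S.phi_add, sbr_add_right, sbr_add_right,
      sbr_add_right]
    exact add_mem (add_mem (add_mem
      (key0 0 0 _ _ (S.proj_mem 0 x) (S.proj_mem 0 y))
      (key0 0 1 _ _ (S.proj_mem 0 x) (S.proj_mem 1 y)))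
      (key0 1 0 _ _ (S.proj_mem 1 x) (S.proj_mem 0 y)))
      (key0 1 1 _ _ (S.proj_mem 1 x) (S.proj_mem 1 y))
  have main : ∀ B', B' ∈ sp → sbr pa pb A (S.phi pb B') ∈ sp := by
    intro B' hB'
    induction hB' using Submodule.span_induction with
    | mem X hX => obtain ⟨x, y, rfl⟩ := hX; exact key x y
    | zero => rw [S.phi_zero, sbr_zero_right]; exact Submodule.zero_mem _
    | add X Y hX hY ihX ihY => rw [S.phi_add, sbr_add_right]; exact add_mem ihX ihY
    | smul c X hX ihX => rw [S.phi_smul, sbr_smul_right]; exact Submodule.smul_mem _ _ ihX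
  have := main B hBsp
  rwa [S.phi_of_homEnd hB] at this

lemma sbr_jacobi (p q r : ZMod 2) (A B C : Module.End k V) :
    sg k (p*r) • sbr p (q+r) A (sbr q r B C) + sg k (q*p) • sbr q (r+p) B (sbr r p C A)
    + sg k (r*q) • sbr r (p+q) C (sbr p q A B) = 0 := by
  rcases zmod2_cases p with rfl | rfl <;> rcases zmod2_cases q with rfl | rfl <;>
    rcases zmod2_cases r with rfl | rfl <;>
    simp [sbr, neg_smul, one_smul] <;> noncomm_ring

lemma super_jacobi (S : SuperSpace k V) (g : Submodule k (Module.End k V))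
    (R : V →ₗ[k] V →ₗ[k] Module.End k V)
    (hskew : SuperSkew S R) (hBi : Bianchi S R)
    (hann : ∀ (pA : ZMod 2) (A : Module.End k V), A ∈ g → S.HomEnd pA A →
      ∀ (p q : ZMod 2) (x y : V), x ∈ S.part p → y ∈ S.part q →
        sbr pA (p + q) A (R x y) = R (A x) y + sg k (pA * p) • R x (A y))
    (p q r : ZMod 2) (a b c : Module.End k V × V)
    (hAg : a.1 ∈ g) (hA : S.HomEnd p a.1) (hx : a.2 ∈ S.part p)
    (hBg : b.1 ∈ g) (hBh : S.HomEnd q b.1) (hy : b.2 ∈ S.part q)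
    (hCg : c.1 ∈ g) (hC : S.HomEnd r c.1) (hz : c.2 ∈ S.part r) :
    sg k (p * r) • hbr R p (q + r) a (hbr R q r b c)
      + sg k (q * p) • hbr R q (r + p) b (hbr R r p c a)
      + sg k (r * q) • hbr R r (p + q) c (hbr R p q a b) = 0 := by
  obtain ⟨A, x⟩ := a
  obtain ⟨B, y⟩ := b
  obtain ⟨C, z⟩ := c
  simp only at hAg hA hx hBg hBh hy hCg hC hz
  have h1 := hann p A hAg hA q r y z hy hz
  have h2 := hann q B hBg hBh r p z x hz hx
  have h3 := hann r C hCg hC p q x y hx hy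
  have s1 := hskew (q + p) r (A y) z (hA q y hy) hz
  have s2 := hskew (r + q) p (B z) x (hBh r z hz) hx
  have s3 := hskew (p + r) q (C x) y (hC p x hx) hy
  have jac := sbr_jacobi p q r A B C
  have bian := hBi p q r x y z hx hy hz
  refine Prod.ext ?_ ?_
  · simp only [hbr, Prod.fst_add, Prod.smul_fst, Prod.fst_zero,
      sbr_sub_right, map_sub, map_smul, sbr_smul_right, h1, h2, h3, s1, s2, s3]
    rcases zmod2_cases p with rfl | rfl <;> rcases zmod2_cases q with rfl | rfl <;>
      rcases zmod2_cases r with rfl | rfl <;>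
      simp only [sg_zero, sg_one, two_zmod, zero_add, add_zero, mul_zero, zero_mul,
        mul_one, one_mul, neg_smul, one_smul, neg_neg, smul_neg] at jac ⊢ <;>
      linear_combination (norm := module) jac
  · simp only [hbr, Prod.snd_add, Prod.smul_snd, Prod.snd_zero,
      map_sub, map_smul, LinearMap.sub_apply, LinearMap.smul_apply, sbr,
      Module.End.mul_apply]
    rcases zmod2_cases p with rfl | rfl <;> rcases zmod2_cases q with rfl | rfl <;>
      rcases zmod2_cases r with rfl | rfl <;>
      simp only [sg_zero, sg_one, two_zmod, zero_add, add_zero, mul_zero, zero_mul,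
        mul_one, one_mul, neg_smul, one_smul, neg_neg, smul_neg] at bian ⊢ <;>
      first
      | linear_combination (norm := module) bian
      | linear_combination (norm := module) ((-1 : k) • bian)

/-- if `R ∈ R(g)` is even and annihilated by the `g`-action, then
`h₀ = span{R(x,y)} ⊆ g` is a Lie supersubalgebra, and `h₀ ⊕ V` with the bracket
`[x,y] = −R(x,y)`, `[A,x] = A x`, `[A,B]` the supercommutator is a symmetric
decomposition: `[h₀,h₀] ⊆ h₀`, `[h₀,V] ⊆ V`, `[V,V] ⊆ h₀`, and the super Jacobi
identity holds for homogeneous elements of `h₀ ⊕ V`. -/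
theorem symmetric_decomposition_of_invariant_curvature {k V : Type*} [Field k]
    [AddCommGroup V] [Module k V]
    (S : SuperSpace k V) (g : Submodule k (Module.End k V))
    (R : V →ₗ[k] V →ₗ[k] Module.End k V)
    (hRg : ∀ x y, R x y ∈ g) (hskew : SuperSkew S R) (hB : Bianchi S R)
    (heven : HomCurv S 0 R)
    (hann : ∀ (pA : ZMod 2) (A : Module.End k V), A ∈ g → S.HomEnd pA A →
      ∀ (p q : ZMod 2) (x y : V), x ∈ S.part p → y ∈ S.part q →
        sbr pA (p + q) A (R x y) = R (A x) y + sg k (pA * p) • R x (A y)) :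
    -- `h₀ = span{R(x,y)}` is contained in `g`
    Submodule.span k {A : Module.End k V | ∃ x y, A = R x y} ≤ g ∧
    -- `[h₀,h₀] ⊆ h₀`: `h₀` is a Lie supersubalgebra
    (∀ (pa pb : ZMod 2) (A B : Module.End k V),
      A ∈ Submodule.span k {A : Module.End k V | ∃ x y, A = R x y} → S.HomEnd pa A →
      B ∈ Submodule.span k {A : Module.End k V | ∃ x y, A = R x y} → S.HomEnd pb B →
      sbr pa pb A B ∈ Submodule.span k {A : Module.End k V | ∃ x y, A = R x y}) ∧
    -- `[V,V] = −R(·,·)` has image in `h₀`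
    (∀ x y : V, R x y ∈ Submodule.span k {A : Module.End k V | ∃ x y, A = R x y}) ∧
    -- the bracket of elements of `h₀ ⊕ V` has first component in `h₀`
    (∀ (p q : ZMod 2) (a b : Module.End k V × V),
      a.1 ∈ Submodule.span k {A : Module.End k V | ∃ x y, A = R x y} →
      S.HomEnd p a.1 → a.2 ∈ S.part p →
      b.1 ∈ Submodule.span k {A : Module.End k V | ∃ x y, A = R x y} →
      S.HomEnd q b.1 → b.2 ∈ S.part q →
      (hbr R p q a b).1 ∈ Submodule.span k {A : Module.End k V | ∃ x y, A = R x y}) ∧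
    -- super Jacobi identity on `h₀ ⊕ V`
    (∀ (p q r : ZMod 2) (a b c : Module.End k V × V),
      a.1 ∈ Submodule.span k {A : Module.End k V | ∃ x y, A = R x y} →
      S.HomEnd p a.1 → a.2 ∈ S.part p →
      b.1 ∈ Submodule.span k {A : Module.End k V | ∃ x y, A = R x y} →
      S.HomEnd q b.1 → b.2 ∈ S.part q →
      c.1 ∈ Submodule.span k {A : Module.End k V | ∃ x y, A = R x y} →
      S.HomEnd r c.1 → c.2 ∈ S.part r →
      sg k (p * r) • hbr R p (q + r) a (hbr R q r b c)
        + sg k (q * p) • hbr R q (r + p) b (hbr R r p c a)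
        + sg k (r * q) • hbr R r (p + q) c (hbr R p q a b) = 0) := by
  have hle : Submodule.span k {A : Module.End k V | ∃ x y, A = R x y} ≤ g :=
    Submodule.span_le.2 (by rintro A ⟨x, y, rfl⟩; exact hRg x y)
  have hmem : ∀ x y : V,
      R x y ∈ Submodule.span k {A : Module.End k V | ∃ x y, A = R x y} :=
    fun x y => Submodule.subset_span ⟨x, y, rfl⟩
  have hclosed : ∀ (pa pb : ZMod 2) (A B : Module.End k V),
      A ∈ Submodule.span k {A : Module.End k V | ∃ x y, A = R x y} → S.HomEnd pa A →
      B ∈ Submodule.span k {A : Module.End k V | ∃ x y, A = R x y} → S.HomEnd pb B →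
      sbr pa pb A B ∈ Submodule.span k {A : Module.End k V | ∃ x y, A = R x y} :=
    fun pa pb A B hAsp hA hBsp hB =>
      sbr_mem_span S g R heven hann pa pb A B (hle hAsp) hA hBsp hB
  refine ⟨hle, hclosed, hmem, ?_, ?_⟩
  · intro p q a b ha1 hA ha2 hb1 hBh hb2
    exact sub_mem (hclosed p q a.1 b.1 ha1 hA hb1 hBh) (hmem a.2 b.2)
  · intro p q r a b c ha1 hA ha2 hb1 hBh hb2 hc1 hC hc2
    exact super_jacobi S g R hskew hB hann p q r a b c
      (hle ha1) hA ha2 (hle hb1) hBh hb2 (hle hc1) hC hc2
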